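/- Let 1 < α < 2 and κ > 0. Then for every γ > 0 the function u ↦ (e^{−γu} − 1 + γu)·κ·|u|^{-(1+α)} is Lebesgue integrable on [−1,1] \ {0}, and there exists γ > 0 such that γ − ∫_{[−1,1]\{0}} (e^{−γu} − 1 + γu)·κ·|u|^{-(1+α)} du = 0. -/

import Mathlib

open MeasureTheory

private lemma exp_taylor_nonneg (x : ℝ) : 0 ≤ Real.exp x - 1 - x := by
  nlinarith [Real.add_one_le_exp x]

private lemma exp_taylor_bound (x : ℝ) : Real.exp x - 1 - x ≤ x ^ 2 * Real.exp |x| := by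
  rcases le_or_gt 0 x with hx | hx
  · rw [abs_of_nonneg hx]
    rcases le_or_gt x 1 with hx1 | hx1
    · have h1 : 1 + -x ≤ Real.exp (-x) := by linarith [Real.add_one_le_exp (-x)]
      have hA : Real.exp x * (1 + -x) ≤ 1 := by
        calc Real.exp x * (1 + -x) ≤ Real.exp x * Real.exp (-x) :=
              mul_le_mul_of_nonneg_left h1 (Real.exp_pos x).le
          _ = 1 := by rw [← Real.exp_add]; simp
      nlinarith [Real.exp_pos x]
    · nlinarith [Real.exp_pos x, mul_nonneg (by nlinarith : (0:ℝ) ≤ x ^ 2 - 1) (Real.exp_pos x).le]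
  · rw [abs_of_neg hx]
    have h1 : 1 + -x ≤ Real.exp (-x) := by linarith [Real.add_one_le_exp (-x)]
    have hA : Real.exp x * (1 + -x) ≤ 1 := by
      calc Real.exp x * (1 + -x) ≤ Real.exp x * Real.exp (-x) :=
            mul_le_mul_of_nonneg_left h1 (Real.exp_pos x).le
        _ = 1 := by rw [← Real.exp_add]; simp
    nlinarith [hA, h1, sq_nonneg x, mul_le_mul_of_nonneg_left h1 (sq_nonneg x),
      Real.exp_pos x, Real.exp_pos (-x)]

private lemma exp_quad (x : ℝ) (hx : 0 ≤ x) : 1 + x + x ^ 2 / 4 ≤ Real.exp x := by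
  have h1 : 1 + x / 2 ≤ Real.exp (x / 2) := by linarith [Real.add_one_le_exp (x / 2)]
  have h2 : Real.exp (x / 2) * Real.exp (x / 2) = Real.exp x := by
    rw [← Real.exp_add]; ring_nf
  nlinarith [Real.exp_pos (x / 2)]

private lemma abs_rpow_integrableOn {p : ℝ} (hp : -1 < p) :
    IntegrableOn (fun u : ℝ => |u| ^ p) (Set.Icc (-1 : ℝ) 1) volume := by
  have h01 : IntervalIntegrable (fun u : ℝ => |u| ^ p) volume 0 1 := by
    refine (intervalIntegral.intervalIntegrable_rpow' hp (a := 0) (b := 1)).congr_ae ?_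
    rw [Set.uIoc_of_le (by norm_num : (0:ℝ) ≤ 1)]
    filter_upwards [ae_restrict_mem measurableSet_Ioc] with x hx
    rw [abs_of_pos hx.1]
  have hneg : IntervalIntegrable (fun u : ℝ => |u| ^ p) volume (-1) 0 := by
    have := (IntervalIntegrable.iff_comp_neg (f := fun u : ℝ => |u| ^ p) (a := 0) (b := 1) (by simp)).mp h01
    simp only [abs_neg, neg_zero] at this
    exact this.symm
  have h : IntervalIntegrable (fun u : ℝ => |u| ^ p) volume (-1) 1 := hneg.trans h01
  rw [intervalIntegrable_iff_integrableOn_Ioc_of_le (by norm_num : (-1:ℝ) ≤ 1)] at h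
  rwa [integrableOn_Icc_iff_integrableOn_Ioc]

private lemma sq_mul_rpow {α : ℝ} (hα1 : 1 < α) (hα2 : α < 2) (u : ℝ) :
    u ^ 2 * |u| ^ (-(1 + α)) = |u| ^ (1 - α) := by
  rcases eq_or_ne u 0 with rfl | hu
  · simp [Real.zero_rpow (by intro h; nlinarith : -(1 + α) ≠ 0),
      Real.zero_rpow (by intro h; nlinarith : (1 - α) ≠ 0)]
  · have h0 : (0:ℝ) < |u| := abs_pos.mpr hu
    rw [← sq_abs, sq, show (1 - α) = 1 + (1 + -(1 + α)) by ring, Real.rpow_add h0,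
      Real.rpow_add h0, Real.rpow_one]
    ring

private lemma meas_aux (γ κ α : ℝ) : Measurable
    (fun u : ℝ => (Real.exp (-γ * u) - 1 + γ * u) * (κ * |u| ^ (-(1 + α)))) := by
  have h1 : Measurable fun u : ℝ => γ * u := measurable_id.const_mul γ
  have h2 : Measurable fun u : ℝ => Real.exp (-γ * u) :=
    Real.measurable_exp.comp (measurable_id.const_mul (-γ))
  have h3 : Measurable fun u : ℝ => |u| ^ (-(1 + α)) := by measurability
  exact ((h2.sub measurable_const).add h1).mul (h3.const_mul κ)

/-- For the truncated Lévy measure `ν(du) = κ|u|^{-(1+α)} 1_{|u|≤1} du` with `1 < α < 2`,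
the integrand of the decay-rate equation is integrable for each `γ > 0`, and there is a
`γ > 0` solving `γ = ∫_{[-1,1]\{0}} (e^{-γu} - 1 + γu) κ|u|^{-(1+α)} du`. -/
theorem decay_rate_equation (α κ : ℝ) (hα1 : 1 < α) (hα2 : α < 2) (hκ : 0 < κ) :
    (∀ γ : ℝ, 0 < γ →
      Integrable (fun u => (Real.exp (-γ * u) - 1 + γ * u) * (κ * |u| ^ (-(1 + α))))
        ((volume : Measure ℝ).restrict (Set.Icc (-1 : ℝ) 1 \ {0}))) ∧
    ∃ γ : ℝ, 0 < γ ∧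
      γ - ∫ u in (Set.Icc (-1 : ℝ) 1 \ {0}),
        (Real.exp (-γ * u) - 1 + γ * u) * (κ * |u| ^ (-(1 + α))) = 0 := by
  have hsae : (Set.Icc (-1:ℝ) 1 \ {0} : Set ℝ) =ᵐ[volume] Set.Icc (-1:ℝ) 1 := by
    refine MeasureTheory.diff_ae_eq_self.mpr (measure_mono_null ?_ (measure_singleton (0:ℝ)))
    intro x hx
    exact hx.2
  have hres : (volume : Measure ℝ).restrict (Set.Icc (-1:ℝ) 1 \ {0})
      = (volume : Measure ℝ).restrict (Set.Icc (-1:ℝ) 1) := Measure.restrict_congr_set hsae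
  have hmeas : ∀ γ : ℝ, AEStronglyMeasurable
      (fun u => (Real.exp (-γ * u) - 1 + γ * u) * (κ * |u| ^ (-(1 + α))))
      ((volume : Measure ℝ).restrict (Set.Icc (-1:ℝ) 1)) := by
    intro γ
    exact (meas_aux γ κ α).aestronglyMeasurable
  -- pointwise nonnegativity
  have hFnn : ∀ γ u : ℝ, 0 ≤ (Real.exp (-γ * u) - 1 + γ * u) * (κ * |u| ^ (-(1 + α))) := by
    intro γ u
    have h0 := exp_taylor_nonneg (-γ * u)
    exact mul_nonneg (by linarith) (mul_nonneg hκ.le (Real.rpow_nonneg (abs_nonneg u) _))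
  -- pointwise domination
  have hpt : ∀ γ : ℝ, 0 ≤ γ → ∀ u ∈ Set.Icc (-1:ℝ) 1,
      ‖(Real.exp (-γ * u) - 1 + γ * u) * (κ * |u| ^ (-(1 + α)))‖
        ≤ κ * γ ^ 2 * Real.exp γ * |u| ^ (1 - α) := by
    intro γ hγ u hu
    have habs : |u| ≤ 1 := abs_le.mpr ⟨hu.1, hu.2⟩
    have hr : (0:ℝ) ≤ |u| ^ (-(1+α)) := Real.rpow_nonneg (abs_nonneg u) _
    have h0 : 0 ≤ Real.exp (-γ*u) - 1 + γ*u := by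
      have := exp_taylor_nonneg (-γ*u); linarith
    have hb : Real.exp (-γ*u) - 1 + γ*u ≤ γ^2 * u^2 * Real.exp γ := by
      have h1 := exp_taylor_bound (-γ*u)
      have h2 : |(-γ*u)| = γ * |u| := by rw [abs_mul, abs_neg, abs_of_nonneg hγ]
      have h3 : Real.exp (γ * |u|) ≤ Real.exp γ := by
        apply Real.exp_le_exp.mpr; nlinarith
      have h5 : (0:ℝ) ≤ γ^2 * u^2 := by positivity
      calc Real.exp (-γ*u) - 1 + γ*u = Real.exp (-γ*u) - 1 - (-γ*u) := by ring
        _ ≤ (-γ*u)^2 * Real.exp |(-γ*u)| := h1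
        _ = γ^2*u^2 * Real.exp (γ*|u|) := by rw [h2]; ring
        _ ≤ γ^2*u^2 * Real.exp γ := mul_le_mul_of_nonneg_left h3 h5
    rw [Real.norm_eq_abs, abs_of_nonneg (hFnn γ u)]
    calc (Real.exp (-γ*u) - 1 + γ*u) * (κ * |u|^(-(1+α)))
        ≤ (γ^2*u^2*Real.exp γ) * (κ * |u|^(-(1+α))) :=
          mul_le_mul_of_nonneg_right hb (mul_nonneg hκ.le hr)
      _ = κ * γ^2 * Real.exp γ * (u^2 * |u|^(-(1+α))) := by ring
      _ = κ * γ^2 * Real.exp γ * |u|^(1-α) := by rw [sq_mul_rpow hα1 hα2 u]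
  have hα' : (-1:ℝ) < 1 - α := by linarith
  have hbint : ∀ c : ℝ, Integrable (fun u : ℝ => c * |u| ^ (1 - α))
      ((volume : Measure ℝ).restrict (Set.Icc (-1:ℝ) 1)) :=
    fun c => (abs_rpow_integrableOn hα').const_mul c
  have hint : ∀ γ : ℝ, 0 ≤ γ →
      Integrable (fun u => (Real.exp (-γ * u) - 1 + γ * u) * (κ * |u| ^ (-(1 + α))))
        ((volume : Measure ℝ).restrict (Set.Icc (-1:ℝ) 1)) := by
    intro γ hγ
    refine (hbint (κ * γ^2 * Real.exp γ)).mono (hmeas γ) ?_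
    filter_upwards [ae_restrict_mem measurableSet_Icc] with u hu
    exact (hpt γ hγ u hu).trans (le_abs_self _)
  constructor
  · intro γ hγ
    rw [hres]
    exact hint γ hγ.le
  -- continuity of the integral
  have hG : ∀ γ₀ : ℝ, 0 < γ₀ → ContinuousAt (fun γ : ℝ => ∫ u in Set.Icc (-1:ℝ) 1,
      (Real.exp (-γ * u) - 1 + γ * u) * (κ * |u| ^ (-(1 + α)))) γ₀ := by
    intro γ₀ hγ₀
    apply continuousAt_of_dominated (bound := fun u => κ * (γ₀+1)^2 * Real.exp (γ₀+1) * |u|^(1-α))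
    · exact Filter.Eventually.of_forall fun γ => hmeas γ
    · have hmem : γ₀ ∈ Set.Ioo (0:ℝ) (γ₀+1) := ⟨hγ₀, by linarith⟩
      filter_upwards [isOpen_Ioo.eventually_mem hmem] with γ hγ
      filter_upwards [ae_restrict_mem measurableSet_Icc] with u hu
      refine (hpt γ hγ.1.le u hu).trans ?_
      have hup : (0:ℝ) ≤ |u|^(1-α) := Real.rpow_nonneg (abs_nonneg u) _
      have hee : Real.exp γ ≤ Real.exp (γ₀+1) := Real.exp_le_exp.mpr hγ.2.le
      have hsq : γ^2 ≤ (γ₀+1)^2 := by nlinarith [hγ.1, hγ.2]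
      have hme : γ^2 * Real.exp γ ≤ (γ₀+1)^2 * Real.exp (γ₀+1) :=
        mul_le_mul hsq hee (Real.exp_pos γ).le (by positivity)
      have h1 : κ * γ^2 * Real.exp γ ≤ κ * (γ₀+1)^2 * Real.exp (γ₀+1) := by
        calc κ * γ^2 * Real.exp γ = κ * (γ^2 * Real.exp γ) := by ring
          _ ≤ κ * ((γ₀+1)^2 * Real.exp (γ₀+1)) := mul_le_mul_of_nonneg_left hme hκ.le
          _ = κ * (γ₀+1)^2 * Real.exp (γ₀+1) := by ring
      exact mul_le_mul_of_nonneg_right h1 hup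
    · exact hbint _
    · refine Filter.Eventually.of_forall fun u => ?_
      have hc : Continuous fun γ : ℝ => Real.exp (-γ * u) - 1 + γ * u := by fun_prop
      exact (hc.continuousAt).mul continuousAt_const
  obtain ⟨I, hIdef⟩ : ∃ I : ℝ, I = ∫ u in Set.Icc (-1:ℝ) 1, |u| ^ (1 - α) := ⟨_, rfl⟩
  have hI : 0 ≤ I := by
    rw [hIdef]
    apply setIntegral_nonneg measurableSet_Icc
    exact fun u _ => Real.rpow_nonneg (abs_nonneg u) _
  have hGle : ∀ γ : ℝ, 0 ≤ γ →
      (∫ u in Set.Icc (-1:ℝ) 1, (Real.exp (-γ * u) - 1 + γ * u) * (κ * |u| ^ (-(1 + α))))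
        ≤ κ * γ^2 * Real.exp γ * I := by
    intro γ hγ
    have h1 : (∫ u in Set.Icc (-1:ℝ) 1, (Real.exp (-γ * u) - 1 + γ * u) * (κ * |u| ^ (-(1 + α))))
        ≤ ∫ u in Set.Icc (-1:ℝ) 1, (κ * γ^2 * Real.exp γ) * |u| ^ (1-α) := by
      refine integral_mono_ae (hint γ hγ) (hbint _) ?_
      filter_upwards [ae_restrict_mem measurableSet_Icc] with u hu
      calc (Real.exp (-γ * u) - 1 + γ * u) * (κ * |u| ^ (-(1 + α)))
          ≤ ‖(Real.exp (-γ * u) - 1 + γ * u) * (κ * |u| ^ (-(1 + α)))‖ := le_abs_self _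
        _ ≤ κ * γ ^ 2 * Real.exp γ * |u| ^ (1 - α) := hpt γ hγ u hu
    rw [integral_const_mul, ← hIdef] at h1
    exact h1
  -- small gamma
  obtain ⟨C, hCdef⟩ : ∃ C : ℝ, C = κ * Real.exp 1 * I + 1 := ⟨_, rfl⟩
  have hC : 0 < C := by rw [hCdef]; positivity
  obtain ⟨γ₀, hγ₀def⟩ : ∃ γ₀ : ℝ, γ₀ = min 1 (1/(2*C)) := ⟨_, rfl⟩
  have hγ₀pos : 0 < γ₀ := by rw [hγ₀def]; exact lt_min one_pos (by positivity)
  have hγ₀le1 : γ₀ ≤ 1 := hγ₀def ▸ min_le_left _ _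
  have hmul : γ₀ * (2*C) ≤ 1 :=
    (le_div_iff₀ (by positivity)).mp (hγ₀def ▸ min_le_right 1 (1/(2*C)))
  have hsmall : 0 < γ₀ - ∫ u in Set.Icc (-1:ℝ) 1,
      (Real.exp (-γ₀ * u) - 1 + γ₀ * u) * (κ * |u| ^ (-(1 + α))) := by
    have h1 := hGle γ₀ hγ₀pos.le
    have hexp : Real.exp γ₀ ≤ Real.exp 1 := Real.exp_le_exp.mpr hγ₀le1
    have h2 : κ * γ₀^2 * Real.exp γ₀ * I ≤ γ₀^2 * C := by
      have h3 : κ * γ₀^2 * Real.exp γ₀ ≤ κ * γ₀^2 * Real.exp 1 :=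
        mul_le_mul_of_nonneg_left hexp (by positivity)
      have h4 : κ * γ₀^2 * Real.exp γ₀ * I ≤ κ * γ₀^2 * Real.exp 1 * I :=
        mul_le_mul_of_nonneg_right h3 hI
      nlinarith [sq_nonneg γ₀]
    have h5 : γ₀^2 * C ≤ γ₀ / 2 := by nlinarith [sq_nonneg γ₀, hγ₀pos, hmul, hC]
    linarith
  -- large gamma
  obtain ⟨γ₁, hγ₁def⟩ : ∃ γ₁ : ℝ, γ₁ = 32/κ + 9 := ⟨_, rfl⟩
  have hγ₁9 : (9:ℝ) ≤ γ₁ := by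
    have h : 0 < 32/κ := by positivity
    rw [hγ₁def]; linarith
  have hγ₁pos : 0 < γ₁ := by linarith
  have hkγ : κ * γ₁ = 32 + 9*κ := by rw [hγ₁def]; field_simp
  have hGlb : κ/2 * (γ₁^2/16 - γ₁/2) ≤ ∫ u in Set.Icc (-1:ℝ) 1,
      (Real.exp (-γ₁ * u) - 1 + γ₁ * u) * (κ * |u| ^ (-(1 + α))) := by
    have ht_sub : Set.Icc (-1:ℝ) (-(1/2)) ⊆ Set.Icc (-1:ℝ) 1 := by
      apply Set.Icc_subset_Icc_right; norm_num
    have hfacnn : 0 ≤ γ₁^2/16 - γ₁/2 := by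
      nlinarith [mul_nonneg (by linarith : (0:ℝ) ≤ γ₁ - 8) hγ₁pos.le]
    have hconst : ∀ u ∈ Set.Icc (-1:ℝ) (-(1/2)), κ * (γ₁^2/16 - γ₁/2)
        ≤ (Real.exp (-γ₁ * u) - 1 + γ₁ * u) * (κ * |u| ^ (-(1 + α))) := by
      intro u hu
      obtain ⟨hu1, hu2⟩ := hu
      have h1 : γ₁/2 ≤ -γ₁ * u := by
        nlinarith [mul_nonneg hγ₁pos.le (by linarith : (0:ℝ) ≤ -u - 1/2)]
      have h2 : Real.exp (γ₁/2) ≤ Real.exp (-γ₁*u) := Real.exp_le_exp.mpr h1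
      have h3 := exp_quad (γ₁/2) (by positivity)
      have h4 : -γ₁ ≤ γ₁ * u := by
        nlinarith [mul_nonneg hγ₁pos.le (by linarith : (0:ℝ) ≤ u + 1)]
      have hfac : γ₁^2/16 - γ₁/2 ≤ Real.exp (-γ₁*u) - 1 + γ₁*u := by nlinarith
      have hupos : (0:ℝ) < |u| := by rw [abs_of_neg (by linarith : u < 0)]; linarith
      have hule : |u| ≤ 1 := by rw [abs_of_neg (by linarith : u < 0)]; linarith
      have h5 : (1:ℝ) ≤ |u| ^ (-(1+α)) :=
        Real.one_le_rpow_of_pos_of_le_one_of_nonpos hupos hule (by linarith)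
      have h6 : κ * 1 ≤ κ * |u|^(-(1+α)) := mul_le_mul_of_nonneg_left h5 hκ.le
      calc κ * (γ₁^2/16 - γ₁/2) = (γ₁^2/16 - γ₁/2) * (κ * 1) := by ring
        _ ≤ (γ₁^2/16 - γ₁/2) * (κ * |u|^(-(1+α))) :=
            mul_le_mul_of_nonneg_left h6 hfacnn
        _ ≤ (Real.exp (-γ₁ * u) - 1 + γ₁ * u) * (κ * |u| ^ (-(1 + α))) :=
            mul_le_mul_of_nonneg_right hfac
              (mul_nonneg hκ.le (Real.rpow_nonneg (abs_nonneg u) _))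
    have hintt : IntegrableOn (fun u => (Real.exp (-γ₁ * u) - 1 + γ₁ * u) *
        (κ * |u| ^ (-(1 + α)))) (Set.Icc (-1:ℝ) (-(1/2))) volume :=
      (hint γ₁ hγ₁pos.le).mono_measure (Measure.restrict_mono ht_sub le_rfl)
    have hstep1 : ∫ u in Set.Icc (-1:ℝ) (-(1/2)), (κ * (γ₁^2/16 - γ₁/2) : ℝ)
        ≤ ∫ u in Set.Icc (-1:ℝ) (-(1/2)), (Real.exp (-γ₁ * u) - 1 + γ₁ * u) *
          (κ * |u| ^ (-(1 + α))) := by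
      refine setIntegral_mono_on ((integrableOn_const_iff (C := (κ * (γ₁^2/16 - γ₁/2) : ℝ))).mpr (Or.inr ?_)) hintt
        measurableSet_Icc hconst
      rw [Real.volume_Icc]; exact ENNReal.ofReal_lt_top
    have hstep2 : ∫ u in Set.Icc (-1:ℝ) (-(1/2)), (Real.exp (-γ₁ * u) - 1 + γ₁ * u) *
          (κ * |u| ^ (-(1 + α)))
        ≤ ∫ u in Set.Icc (-1:ℝ) 1, (Real.exp (-γ₁ * u) - 1 + γ₁ * u) *
          (κ * |u| ^ (-(1 + α))) := by
      refine setIntegral_mono_set (hint γ₁ hγ₁pos.le) ?_ (HasSubset.Subset.eventuallyLE ht_sub)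
      exact Filter.Eventually.of_forall fun u => hFnn γ₁ u
    have hconst_val : ∫ u in Set.Icc (-1:ℝ) (-(1/2)), (κ * (γ₁^2/16 - γ₁/2) : ℝ)
        = (1/2) * (κ * (γ₁^2/16 - γ₁/2)) := by
      rw [setIntegral_const, Real.volume_real_Icc, smul_eq_mul]
      norm_num
    calc κ/2 * (γ₁^2/16 - γ₁/2) = (1/2) * (κ * (γ₁^2/16 - γ₁/2)) := by ring
      _ = ∫ u in Set.Icc (-1:ℝ) (-(1/2)), (κ * (γ₁^2/16 - γ₁/2) : ℝ) := hconst_val.symm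
      _ ≤ _ := le_trans hstep1 hstep2
  have hlarge : γ₁ - (∫ u in Set.Icc (-1:ℝ) 1,
      (Real.exp (-γ₁ * u) - 1 + γ₁ * u) * (κ * |u| ^ (-(1 + α)))) < 0 := by
    nlinarith [hGlb, mul_pos hκ hγ₁pos, hkγ, hγ₁pos]
  -- IVT
  have h01 : γ₀ ≤ γ₁ := le_trans hγ₀le1 (by linarith)
  have hcont : ContinuousOn (fun γ : ℝ => γ - ∫ u in Set.Icc (-1:ℝ) 1,
      (Real.exp (-γ * u) - 1 + γ * u) * (κ * |u| ^ (-(1 + α)))) (Set.Icc γ₀ γ₁) := by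
    intro x hx
    have hxpos : 0 < x := lt_of_lt_of_le hγ₀pos hx.1
    exact ((continuousAt_id.sub (hG x hxpos)).continuousWithinAt)
  obtain ⟨γ, hγmem, hγeq⟩ := intermediate_value_Icc' h01 hcont ⟨hlarge.le, hsmall.le⟩
  refine ⟨γ, lt_of_lt_of_le hγ₀pos hγmem.1, ?_⟩
  have hcong : (∫ u in (Set.Icc (-1:ℝ) 1 \ {0}),
      (Real.exp (-γ * u) - 1 + γ * u) * (κ * |u| ^ (-(1 + α))))
      = ∫ u in Set.Icc (-1:ℝ) 1,
      (Real.exp (-γ * u) - 1 + γ * u) * (κ * |u| ^ (-(1 + α))) :=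
    setIntegral_congr_set hsae
  rw [hcong]
  exact hγeq
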